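/- Let C be a finite set of m candidates, N = {1,…,n} voters with rank functions rank_i : C → {1,…,m}, let k ≤ m, let α_1 ≥ … ≥ α_k ≥ 0 and w_1 ≥ … ≥ w_m ≥ 0 be rationals, and set w'_r = w_r − w_{r+1} for r < m and w'_m = w_m. Then the maximum of ∑_{i∈N} ∑_{ℓ=1}^{k} ∑_{r=1}^{m} α_ℓ·w'_r·x_{i,ℓ,r} over all binary y ∈ {0,1}^C and x ∈ {0,1}^{N×{1,…,k}×{1,…,m}} satisfying ∑_{c∈C} y_c = k and ∑_{ℓ=1}^{k} x_{i,ℓ,r} ≤ ∑_{c : rank_i(c) ≤ r} y_c for all i ∈ N and r ∈ {1,…,m}, equals the maximum over all committees W ⊆ C with |W| = k of the OWA value ∑_{i∈N} ∑_{ℓ=1}^{k} α_ℓ·w_{ρ_i(ℓ)}, where ρ_i(1) ≤ ρ_i(2) ≤ … ≤ ρ_i(k) is the multiset {rank_i(c) : c ∈ W} sorted in non-decreasing order. -/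

import Mathlib

open Finset

lemma fin_exists_greatest (s : Set ℚ) (hf : s.Finite) (hn : s.Nonempty) :
    ∃ a, IsGreatest s a := by
  obtain ⟨a, ha, hmax⟩ := Set.Finite.exists_maximalFor id s hf hn
  exact ⟨a, ha, fun b hb => not_lt.1 fun hab => absurd (hmax hb hab.le) (not_le.2 hab)⟩

lemma tele_aux {m : ℕ} (w w' : Fin m → ℚ)
    (hw' : ∀ r : Fin m,
      w' r = w r - (if h : (r : ℕ) + 1 < m then w ⟨(r : ℕ) + 1, h⟩ else 0)) :
    ∀ (t s : ℕ), s + t = m →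
      (∑ r : Fin m, (if s ≤ (r : ℕ) then w' r else 0))
        = (if h : s < m then w ⟨s, h⟩ else 0) := by
  intro t
  induction t with
  | zero =>
      intro s hs
      rw [dif_neg (by omega)]
      exact Finset.sum_eq_zero fun r _ => if_neg (by omega)
  | succ t ih =>
      intro s hs
      have hsm : s < m := by omega
      have hsplit : ∀ r : Fin m, (if s ≤ (r : ℕ) then w' r else 0)
          = (if s + 1 ≤ (r : ℕ) then w' r else 0) + (if r = ⟨s, hsm⟩ then w' r else 0) := by
        intro r
        rcases lt_trichotomy (r : ℕ) s with h | h | h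
        · rw [if_neg (by omega), if_neg (by omega),
            if_neg (Fin.ne_of_val_ne (Nat.ne_of_lt h))]
          ring
        · rw [if_pos (by omega), if_neg (by omega), if_pos (Fin.ext h)]
          ring
        · rw [if_pos (by omega), if_pos (by omega),
            if_neg (Fin.ne_of_val_ne (ne_of_gt h))]
          ring
      rw [Finset.sum_congr rfl fun r _ => hsplit r, Finset.sum_add_distrib,
        ih (s + 1) (by omega),
        Finset.sum_ite_eq' Finset.univ (⟨s, hsm⟩ : Fin m) (fun r => w' r),
        if_pos (Finset.mem_univ _), dif_pos hsm, hw']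
      simp only [Fin.val_mk]
      ring

lemma tele {m : ℕ} (w w' : Fin m → ℚ)
    (hw' : ∀ r : Fin m,
      w' r = w r - (if h : (r : ℕ) + 1 < m then w ⟨(r : ℕ) + 1, h⟩ else 0))
    (s : Fin m) :
    (∑ r : Fin m, (if s ≤ r then w' r else 0)) = w s := by
  have := tele_aux w w' hw' (m - (s : ℕ)) (s : ℕ) (by omega)
  simp only [Fin.le_def]
  rw [this, dif_pos s.isLt, Fin.eta]

lemma domin {k : ℕ} (α : Fin k → ℚ) (hmono : ∀ i j : Fin k, i ≤ j → α j ≤ α i)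
    (hnn : ∀ ℓ, 0 ≤ α ℓ) (S I : Finset (Fin k))
    (hI : ∀ a b : Fin k, a ≤ b → b ∈ I → a ∈ I)
    (hcard : S.card ≤ I.card) :
    ∑ ℓ ∈ S, α ℓ ≤ ∑ ℓ ∈ I, α ℓ := by
  classical
  have key : ∑ ℓ ∈ S \ I, α ℓ ≤ ∑ ℓ ∈ I \ S, α ℓ := by
    rcases (S \ I).eq_empty_or_nonempty with he | hne
    · rw [he, Finset.sum_empty]
      exact Finset.sum_nonneg fun ℓ _ => hnn ℓ
    · have hbS := (S \ I).min'_mem hne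
      set b := (S \ I).min' hne with hb
      have hcard2 : (S \ I).card ≤ (I \ S).card := by
        have h1 := Finset.card_inter_add_card_sdiff S I
        have h2 := Finset.card_inter_add_card_sdiff I S
        rw [Finset.inter_comm] at h2
        omega
      calc ∑ ℓ ∈ S \ I, α ℓ ≤ (S \ I).card • α b :=
            Finset.sum_le_card_nsmul _ _ _ (fun x hx => hmono b x ((S \ I).min'_le x hx))
        _ ≤ (I \ S).card • α b := by
            simp only [nsmul_eq_mul]
            exact mul_le_mul_of_nonneg_right (Nat.cast_le.2 hcard2) (hnn b)
        _ ≤ ∑ ℓ ∈ I \ S, α ℓ := Finset.card_nsmul_le_sum _ _ _ (fun x hx =>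
            hmono x b (le_of_not_ge fun hbx =>
              (Finset.mem_sdiff.1 hbS).2 (hI b x hbx (Finset.mem_sdiff.1 hx).1)))
  calc ∑ ℓ ∈ S, α ℓ = ∑ ℓ ∈ S ∩ I, α ℓ + ∑ ℓ ∈ S \ I, α ℓ :=
        (Finset.sum_inter_add_sum_sdiff S I α).symm
    _ ≤ ∑ ℓ ∈ S ∩ I, α ℓ + ∑ ℓ ∈ I \ S, α ℓ := add_le_add_right key _
    _ = ∑ ℓ ∈ I ∩ S, α ℓ + ∑ ℓ ∈ I \ S, α ℓ := by rw [Finset.inter_comm]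
    _ = ∑ ℓ ∈ I, α ℓ := Finset.sum_inter_add_sum_sdiff I S α

lemma exists_rho {n m k : ℕ} (rank : Fin n → Fin m → Fin m) (W : Finset (Fin m))
    (hW : W.card = k) :
    ∃ ρ : Fin n → Fin k → Fin m, (∀ i, Monotone (ρ i)) ∧
      (∀ i, W.val.map (rank i) = (Finset.univ : Finset (Fin k)).val.map (ρ i)) := by
  have hlen : ∀ i, (Multiset.sort (W.val.map (rank i)) (· ≤ ·)).length = k := fun i => by
    rw [Multiset.length_sort, Multiset.card_map]; exact hW
  refine ⟨fun i ℓ => (Multiset.sort (W.val.map (rank i)) (· ≤ ·)).get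
      (Fin.cast (hlen i).symm ℓ), fun i => ?_, fun i => ?_⟩
  · intro a b hab
    exact (Multiset.pairwise_sort _ _).rel_get_of_le hab
  · have h2 : List.ofFn (fun ℓ : Fin k =>
        (Multiset.sort (W.val.map (rank i)) (· ≤ ·)).get (Fin.cast (hlen i).symm ℓ))
        = Multiset.sort (W.val.map (rank i)) (· ≤ ·) := by
      apply List.ext_get (by simp [hlen i])
      intro j h1 h2
      rw [List.get_ofFn]
      congr 1
    rw [Fin.univ_val_map, h2, Multiset.sort_eq]

lemma card_filter_eq {m k : ℕ} (rnk : Fin m → Fin m) (W : Finset (Fin m)) (ρ : Fin k → Fin m)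
    (h : W.val.map rnk = (Finset.univ : Finset (Fin k)).val.map ρ) (r : Fin m) :
    (W.filter (fun c => rnk c ≤ r)).card
      = (Finset.univ.filter (fun ℓ => ρ ℓ ≤ r)).card := by
  classical
  have h2 := congrArg (Multiset.countP (fun s => s ≤ r)) h
  have e1 : (W.filter (fun c => rnk c ≤ r)).card
      = Multiset.countP (fun s => s ≤ r) (W.val.map rnk) := by
    rw [Multiset.countP_map]; rfl
  have e2 : (Finset.univ.filter (fun ℓ => ρ ℓ ≤ r)).card
      = Multiset.countP (fun s => s ≤ r) ((Finset.univ : Finset (Fin k)).val.map ρ) := by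
    rw [Multiset.countP_map]; rfl
  rw [e1, e2, h]

/-- The integer program (OWA-IP) computes an optimal committee under the
OWA-based rule given by a non-increasing nonnegative OWA vector `α` and a
non-increasing nonnegative scoring vector `w` (with `w' r = w r - w (r+1)`,
and `w'` of the last rank equal to `w` there).  The value of a committee
`W` of size `k` is `∑_i ∑_ℓ α_ℓ · w (ρ i ℓ)`, where `ρ i` enumerates the
multiset of ranks `{rank i c : c ∈ W}` in non-decreasing order. -/
theorem stmt11 {n m k : ℕ} (hk : k ≤ m)
    (rank : Fin n → Fin m → Fin m)
    (α : Fin k → ℚ) (hαmono : ∀ i j : Fin k, i ≤ j → α j ≤ α i)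
    (hαnonneg : ∀ ℓ, 0 ≤ α ℓ)
    (w : Fin m → ℚ) (hwmono : ∀ r s : Fin m, r ≤ s → w s ≤ w r)
    (hwnonneg : ∀ r, 0 ≤ w r)
    (w' : Fin m → ℚ)
    (hw' : ∀ r : Fin m,
      w' r = w r - (if h : (r : ℕ) + 1 < m then w ⟨(r : ℕ) + 1, h⟩ else 0)) :
    ∃ q : ℚ,
      IsGreatest {val : ℚ | ∃ (y : Fin m → ℚ) (x : Fin n → Fin k → Fin m → ℚ),
        (∀ c, y c = 0 ∨ y c = 1) ∧
        (∀ i ℓ r, x i ℓ r = 0 ∨ x i ℓ r = 1) ∧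
        (∑ c, y c) = (k : ℚ) ∧
        (∀ i r, (∑ ℓ, x i ℓ r) ≤
          ∑ c ∈ Finset.univ.filter (fun c => rank i c ≤ r), y c) ∧
        val = ∑ i, ∑ ℓ, ∑ r, α ℓ * w' r * x i ℓ r} q ∧
      IsGreatest {val : ℚ | ∃ (W : Finset (Fin m)) (ρ : Fin n → Fin k → Fin m),
        W.card = k ∧
        (∀ i, Monotone (ρ i)) ∧
        (∀ i, W.val.map (rank i) = (Finset.univ : Finset (Fin k)).val.map (ρ i)) ∧
        val = ∑ i, ∑ ℓ, α ℓ * w (ρ i ℓ)} q := by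
  classical
  have hw'nn : ∀ r : Fin m, 0 ≤ w' r := by
    intro r
    rw [hw' r]
    split_ifs with h
    · exact sub_nonneg.2 (hwmono r ⟨(r : ℕ) + 1, h⟩ (by simp [Fin.le_def]))
    · simpa using hwnonneg r
  obtain ⟨W₀, -, hW₀⟩ := Finset.exists_subset_card_eq
      (s := (Finset.univ : Finset (Fin m))) (n := k) (by simpa using hk)
  obtain ⟨ρ₀, hρ₀m, hρ₀s⟩ := exists_rho rank W₀ hW₀
  set B := {val : ℚ | ∃ (W : Finset (Fin m)) (ρ : Fin n → Fin k → Fin m),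
        W.card = k ∧
        (∀ i, Monotone (ρ i)) ∧
        (∀ i, W.val.map (rank i) = (Finset.univ : Finset (Fin k)).val.map (ρ i)) ∧
        val = ∑ i, ∑ ℓ, α ℓ * w (ρ i ℓ)} with hB
  have hBne : B.Nonempty := ⟨_, W₀, ρ₀, hW₀, hρ₀m, hρ₀s, rfl⟩
  have hBfin : B.Finite := by
    apply Set.Finite.subset (Set.finite_range
      (fun p : (Finset (Fin m)) × (Fin n → Fin k → Fin m) => ∑ i, ∑ ℓ, α ℓ * w (p.2 i ℓ)))
    rintro v ⟨W, ρ, -, -, -, rfl⟩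
    exact ⟨(W, ρ), rfl⟩
  obtain ⟨q, hqB⟩ := fin_exists_greatest B hBfin hBne
  refine ⟨q, ⟨?_, ?_⟩, hqB⟩
  · -- q is attained by the integer program
    obtain ⟨W, ρ, hWcard, hρm, hρs, hval⟩ := hqB.1
    refine ⟨fun c => if c ∈ W then 1 else 0,
      fun i ℓ r => if ρ i ℓ ≤ r then 1 else 0, ?_, ?_, ?_, ?_, ?_⟩
    · intro c; dsimp only; split_ifs <;> simp
    · intro i ℓ r; dsimp only; split_ifs <;> simp
    · rw [Finset.sum_boole]
      norm_cast
      rw [Finset.filter_univ_mem]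
      exact hWcard
    · intro i r
      have hcnt := card_filter_eq (rank i) W (ρ i) (hρs i) r
      have lhs : (∑ ℓ, if ρ i ℓ ≤ r then (1 : ℚ) else 0)
          = ((Finset.univ.filter (fun ℓ => ρ i ℓ ≤ r)).card : ℚ) := Finset.sum_boole _ _
      have rhs : (∑ c ∈ Finset.univ.filter (fun c => rank i c ≤ r),
            if c ∈ W then (1 : ℚ) else 0)
          = ((W.filter (fun c => rank i c ≤ r)).card : ℚ) := by
        rw [Finset.sum_boole]
        congr 2
        ext c
        simp [Finset.mem_filter, and_comm]
      rw [lhs, rhs, hcnt]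
    · rw [hval]
      refine Finset.sum_congr rfl fun i _ => Finset.sum_congr rfl fun ℓ _ => ?_
      rw [← tele w w' hw' (ρ i ℓ), Finset.mul_sum]
      refine Finset.sum_congr rfl fun r _ => ?_
      split_ifs with h <;> simp [h]
  · -- q is an upper bound for the integer program
    rintro v ⟨y, x, hy, hx, hysum, hcon, rfl⟩
    set W := Finset.univ.filter (fun c => y c = 1) with hWdef
    have hyW : ∀ c, y c = if c ∈ W then 1 else 0 := by
      intro c
      rcases hy c with h | h <;> simp [hWdef, h]
    have hWcard : W.card = k := by
      have h1 : (∑ c, y c) = (W.card : ℚ) := by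
        rw [Finset.sum_congr rfl fun c _ => hyW c, Finset.sum_boole,
          Finset.filter_univ_mem]
      rw [h1] at hysum
      exact_mod_cast hysum
    obtain ⟨ρ, hρm, hρs⟩ := exists_rho rank W hWcard
    have hmem : (∑ i, ∑ ℓ, α ℓ * w (ρ i ℓ)) ∈ B := ⟨W, ρ, hWcard, hρm, hρs, rfl⟩
    refine le_trans ?_ (hqB.2 hmem)
    refine Finset.sum_le_sum fun i _ => ?_
    have hIlow : ∀ r : Fin m, ∀ a b : Fin k, a ≤ b →
        b ∈ Finset.univ.filter (fun ℓ => ρ i ℓ ≤ r) →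
        a ∈ Finset.univ.filter (fun ℓ => ρ i ℓ ≤ r) := by
      intro r a b hab hb
      simp only [Finset.mem_filter, Finset.mem_univ, true_and] at hb ⊢
      exact le_trans (hρm i hab) hb
    have hScard : ∀ r : Fin m, (Finset.univ.filter (fun ℓ => x i ℓ r = 1)).card
        ≤ (Finset.univ.filter (fun ℓ => ρ i ℓ ≤ r)).card := by
      intro r
      have h1 : (∑ ℓ, x i ℓ r)
          = ((Finset.univ.filter (fun ℓ => x i ℓ r = 1)).card : ℚ) := by
        calc (∑ ℓ, x i ℓ r) = ∑ ℓ, (if x i ℓ r = 1 then (1 : ℚ) else 0) :=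
              Finset.sum_congr rfl (fun ℓ _ => by rcases hx i ℓ r with h | h <;> simp [h])
          _ = _ := Finset.sum_boole _ _
      have h2 : (∑ c ∈ Finset.univ.filter (fun c => rank i c ≤ r), y c)
          = ((Finset.univ.filter (fun ℓ => ρ i ℓ ≤ r)).card : ℚ) := by
        rw [Finset.sum_congr rfl fun c _ => hyW c, Finset.sum_boole,
          ← card_filter_eq (rank i) W (ρ i) (hρs i) r]
        congr 2
        ext c
        simp [Finset.mem_filter, and_comm]
      have h3 := hcon i r
      rw [h1, h2] at h3
      exact_mod_cast h3
    calc ∑ ℓ, ∑ r, α ℓ * w' r * x i ℓ r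
        = ∑ r, (∑ ℓ, α ℓ * x i ℓ r) * w' r := by
          rw [Finset.sum_comm]
          refine Finset.sum_congr rfl fun r _ => ?_
          rw [Finset.sum_mul]
          exact Finset.sum_congr rfl fun ℓ _ => by ring
      _ ≤ ∑ r, (∑ ℓ ∈ Finset.univ.filter (fun ℓ => ρ i ℓ ≤ r), α ℓ) * w' r := by
          refine Finset.sum_le_sum fun r _ => mul_le_mul_of_nonneg_right ?_ (hw'nn r)
          have hSsum : (∑ ℓ, α ℓ * x i ℓ r)
              = ∑ ℓ ∈ Finset.univ.filter (fun ℓ => x i ℓ r = 1), α ℓ := by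
            rw [Finset.sum_filter]
            refine Finset.sum_congr rfl fun ℓ _ => ?_
            rcases hx i ℓ r with h | h <;> simp [h]
          rw [hSsum]
          exact domin α hαmono hαnonneg _ _ (hIlow r) (hScard r)
      _ = ∑ r, ∑ ℓ, α ℓ * (if ρ i ℓ ≤ r then w' r else 0) := by
          refine Finset.sum_congr rfl fun r _ => ?_
          rw [Finset.sum_filter, Finset.sum_mul]
          refine Finset.sum_congr rfl fun ℓ _ => by split_ifs <;> ring
      _ = ∑ ℓ, α ℓ * w (ρ i ℓ) := by
          rw [Finset.sum_comm]
          refine Finset.sum_congr rfl fun ℓ _ => ?_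
          rw [← Finset.mul_sum, tele w w' hw' (ρ i ℓ)]
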